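/- Let V : ℝ² ∖ {0} → ℝ be the Kepler potential V(x) = 1/‖x‖, and let β = (β₁,…,β₆) ∈ ℝ⁶. Then V is compatible with the Killing tensor K(β) on ℝ² ∖ {0} (i.e., the Bertrand–Darboux one-form of V and K(β) is closed) if and only if β₃ = 0 and β₁ = β₂. Hence the most general Killing two-tensor of the Euclidean plane compatible with the Kepler potential is, modulo multiples of the metric, the three-parameter family with components K¹¹ = 2β₄x₂ + β₆x₂², K¹² = −β₄x₁ − β₅x₂ − β₆x₁x₂, K²² = 2β₅x₁ + β₆x₁². -/

import Mathlib

open Real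

/-- Partial derivative with respect to the first Cartesian coordinate. -/
noncomputable def pd1 (f : ℝ × ℝ → ℝ) (x : ℝ × ℝ) : ℝ :=
  deriv (fun t => f (t, x.2)) x.1

/-- Partial derivative with respect to the second Cartesian coordinate. -/
noncomputable def pd2 (f : ℝ × ℝ → ℝ) (x : ℝ × ℝ) : ℝ :=
  deriv (fun t => f (x.1, t)) x.2

/-- Component `K¹¹` of the general Killing two-tensor of the Euclidean plane. -/
def K11 (β : Fin 6 → ℝ) (x : ℝ × ℝ) : ℝ := β 0 + 2 * β 3 * x.2 + β 5 * x.2 ^ 2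

/-- Component `K¹² = K²¹` of the general Killing two-tensor of the Euclidean plane. -/
def K12 (β : Fin 6 → ℝ) (x : ℝ × ℝ) : ℝ := β 2 - β 3 * x.1 - β 4 * x.2 - β 5 * x.1 * x.2

/-- Component `K²²` of the general Killing two-tensor of the Euclidean plane. -/
def K22 (β : Fin 6 → ℝ) (x : ℝ × ℝ) : ℝ := β 1 + 2 * β 4 * x.1 + β 5 * x.1 ^ 2

/-- `V` is compatible with `K(β)` on `U` : the Bertrand–Darboux one-form
`(K¹¹∂₁V + K¹²∂₂V)dx₁ + (K¹²∂₁V + K²²∂₂V)dx₂` is closed on `U`. -/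
def Compatible (β : Fin 6 → ℝ) (V : ℝ × ℝ → ℝ) (U : Set (ℝ × ℝ)) : Prop :=
  ∀ x ∈ U,
    pd2 (fun y => K11 β y * pd1 V y + K12 β y * pd2 V y) x
      = pd1 (fun y => K12 β y * pd1 V y + K22 β y * pd2 V y) x

/-- The Kepler potential `V(x) = 1/‖x‖`. -/
noncomputable def kepler : ℝ × ℝ → ℝ :=
  fun x => 1 / Real.sqrt (x.1 ^ 2 + x.2 ^ 2)

lemma pos_of_ne {y : ℝ × ℝ} (hy : y ≠ 0) : 0 < y.1 ^ 2 + y.2 ^ 2 := by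
  rcases eq_or_ne y.1 0 with h1 | h1
  · have h2 : y.2 ≠ 0 := by
      intro h2
      exact hy (Prod.ext h1 h2)
    positivity
  · positivity

lemma hasDerivAt_invsqrt (c t : ℝ) (h : 0 < t ^ 2 + c) :
    HasDerivAt (fun u : ℝ => 1 / Real.sqrt (u ^ 2 + c))
      (-t / ((t ^ 2 + c) * Real.sqrt (t ^ 2 + c))) t := by
  have hs : Real.sqrt (t ^ 2 + c) ≠ 0 := by positivity
  have h1 : HasDerivAt (fun u : ℝ => u ^ 2 + c) (2 * t) t := by
    simpa using (hasDerivAt_pow 2 t).add_const c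
  have h2 : HasDerivAt (fun u : ℝ => Real.sqrt (u ^ 2 + c))
      (1 / (2 * Real.sqrt (t ^ 2 + c)) * (2 * t)) t :=
    (Real.hasDerivAt_sqrt h.ne').comp t h1
  have h3 := h2.inv hs
  simp only [one_div]
  refine h3.congr_deriv ?_
  rw [Real.sq_sqrt h.le]
  field_simp

lemma hasDerivAt_sqrtcube (c t : ℝ) (h : 0 < t ^ 2 + c) :
    HasDerivAt (fun u : ℝ => (u ^ 2 + c) * Real.sqrt (u ^ 2 + c))
      (3 * t * Real.sqrt (t ^ 2 + c)) t := by
  have hs : Real.sqrt (t ^ 2 + c) ≠ 0 := by positivity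
  have h1 : HasDerivAt (fun u : ℝ => u ^ 2 + c) (2 * t) t := by
    simpa using (hasDerivAt_pow 2 t).add_const c
  have h2 : HasDerivAt (fun u : ℝ => Real.sqrt (u ^ 2 + c))
      (1 / (2 * Real.sqrt (t ^ 2 + c)) * (2 * t)) t :=
    (Real.hasDerivAt_sqrt h.ne').comp t h1
  have h3 := h1.mul h2
  refine h3.congr_deriv ?_
  field_simp
  linear_combination (-t) * Real.sq_sqrt h.le

lemma keyD (a0 a1 a2 c t : ℝ) (h : 0 < t ^ 2 + c) :
    HasDerivAt
      (fun u : ℝ => (a0 + a1 * u + a2 * u ^ 2) / ((u ^ 2 + c) * Real.sqrt (u ^ 2 + c)))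
      (((a1 + 2 * a2 * t) * (t ^ 2 + c) - 3 * t * (a0 + a1 * t + a2 * t ^ 2))
        / ((t ^ 2 + c) ^ 2 * Real.sqrt (t ^ 2 + c))) t := by
  have hs : Real.sqrt (t ^ 2 + c) ≠ 0 := by positivity
  have hd : (t ^ 2 + c) * Real.sqrt (t ^ 2 + c) ≠ 0 := by positivity
  have hnum : HasDerivAt (fun u : ℝ => a0 + a1 * u + a2 * u ^ 2) (a1 + 2 * a2 * t) t := by
    have := (((hasDerivAt_id t).const_mul a1).const_add a0).add
      ((hasDerivAt_pow 2 t).const_mul a2)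
    refine this.congr_deriv ?_
    push_cast
    ring
  have h3 := hnum.div (hasDerivAt_sqrtcube c t h) hd
  refine h3.congr_deriv ?_
  field_simp

lemma pd1_kepler {y : ℝ × ℝ} (hy : y ≠ 0) :
    pd1 kepler y = -y.1 / ((y.1 ^ 2 + y.2 ^ 2) * Real.sqrt (y.1 ^ 2 + y.2 ^ 2)) := by
  have h : 0 < y.1 ^ 2 + y.2 ^ 2 := pos_of_ne hy
  have := (hasDerivAt_invsqrt (y.2 ^ 2) y.1 h).deriv
  simpa [pd1, kepler] using this

lemma pd2_kepler {y : ℝ × ℝ} (hy : y ≠ 0) :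
    pd2 kepler y = -y.2 / ((y.1 ^ 2 + y.2 ^ 2) * Real.sqrt (y.1 ^ 2 + y.2 ^ 2)) := by
  have h : 0 < y.2 ^ 2 + y.1 ^ 2 := by
    have := pos_of_ne hy; linarith
  have hfun : (fun t => kepler (y.1, t)) = fun t => 1 / Real.sqrt (t ^ 2 + y.1 ^ 2) := by
    funext t
    simp [kepler, add_comm]
  rw [pd2, hfun, (hasDerivAt_invsqrt (y.1 ^ 2) y.2 h).deriv, add_comm (y.2 ^ 2) (y.1 ^ 2)]

lemma pd2_P (β : Fin 6 → ℝ) {x : ℝ × ℝ} (hx : x ≠ 0) :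
    pd2 (fun y => K11 β y * pd1 kepler y + K12 β y * pd2 kepler y) x
      = (((-(β 2) - β 3 * x.1) + 2 * β 4 * x.2) * (x.2 ^ 2 + x.1 ^ 2)
          - 3 * x.2 * (-(β 0 * x.1) + (-(β 2) - β 3 * x.1) * x.2 + β 4 * x.2 ^ 2))
        / ((x.2 ^ 2 + x.1 ^ 2) ^ 2 * Real.sqrt (x.2 ^ 2 + x.1 ^ 2)) := by
  have h : 0 < x.2 ^ 2 + x.1 ^ 2 := by
    have := pos_of_ne hx; linarith
  have hcont : ContinuousAt (fun t : ℝ => ((x.1, t) : ℝ × ℝ)) x.2 := by fun_prop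
  have hne : ∀ᶠ t in nhds x.2, ((x.1, t) : ℝ × ℝ) ≠ 0 := hcont.eventually_ne (by simpa using hx)
  have hev : (fun t => K11 β (x.1, t) * pd1 kepler (x.1, t) + K12 β (x.1, t) * pd2 kepler (x.1, t))
      =ᶠ[nhds x.2] (fun t => (-(β 0 * x.1) + (-(β 2) - β 3 * x.1) * t + β 4 * t ^ 2)
        / ((t ^ 2 + x.1 ^ 2) * Real.sqrt (t ^ 2 + x.1 ^ 2))) := by
    filter_upwards [hne] with t ht
    have hs : 0 < x.1 ^ 2 + t ^ 2 := pos_of_ne ht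
    have hsq : Real.sqrt (x.1 ^ 2 + t ^ 2) ≠ 0 := by positivity
    rw [pd1_kepler ht, pd2_kepler ht]
    simp only [K11, K12]
    rw [add_comm (t ^ 2) (x.1 ^ 2)]
    field_simp
    ring
  have hP : pd2 (fun y => K11 β y * pd1 kepler y + K12 β y * pd2 kepler y) x
      = deriv (fun t => K11 β (x.1, t) * pd1 kepler (x.1, t)
          + K12 β (x.1, t) * pd2 kepler (x.1, t)) x.2 := rfl
  rw [hP, hev.deriv_eq,
    (keyD (-(β 0 * x.1)) (-(β 2) - β 3 * x.1) (β 4) (x.1 ^ 2) x.2 h).deriv]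

lemma pd1_Q (β : Fin 6 → ℝ) {x : ℝ × ℝ} (hx : x ≠ 0) :
    pd1 (fun y => K12 β y * pd1 kepler y + K22 β y * pd2 kepler y) x
      = (((-(β 2) - β 4 * x.2) + 2 * β 3 * x.1) * (x.1 ^ 2 + x.2 ^ 2)
          - 3 * x.1 * (-(β 1 * x.2) + (-(β 2) - β 4 * x.2) * x.1 + β 3 * x.1 ^ 2))
        / ((x.1 ^ 2 + x.2 ^ 2) ^ 2 * Real.sqrt (x.1 ^ 2 + x.2 ^ 2)) := by
  have h : 0 < x.1 ^ 2 + x.2 ^ 2 := pos_of_ne hx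
  have hcont : ContinuousAt (fun t : ℝ => ((t, x.2) : ℝ × ℝ)) x.1 := by fun_prop
  have hne : ∀ᶠ t in nhds x.1, ((t, x.2) : ℝ × ℝ) ≠ 0 := hcont.eventually_ne (by simpa using hx)
  have hev : (fun t => K12 β (t, x.2) * pd1 kepler (t, x.2) + K22 β (t, x.2) * pd2 kepler (t, x.2))
      =ᶠ[nhds x.1] (fun t => (-(β 1 * x.2) + (-(β 2) - β 4 * x.2) * t + β 3 * t ^ 2)
        / ((t ^ 2 + x.2 ^ 2) * Real.sqrt (t ^ 2 + x.2 ^ 2))) := by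
    filter_upwards [hne] with t ht
    have hs : 0 < t ^ 2 + x.2 ^ 2 := pos_of_ne ht
    have hsq : Real.sqrt (t ^ 2 + x.2 ^ 2) ≠ 0 := by positivity
    rw [pd1_kepler ht, pd2_kepler ht]
    simp only [K12, K22]
    field_simp
    ring
  have hQ : pd1 (fun y => K12 β y * pd1 kepler y + K22 β y * pd2 kepler y) x
      = deriv (fun t => K12 β (t, x.2) * pd1 kepler (t, x.2)
          + K22 β (t, x.2) * pd2 kepler (t, x.2)) x.1 := rfl
  rw [hQ, hev.deriv_eq,
    (keyD (-(β 1 * x.2)) (-(β 2) - β 4 * x.2) (β 3) (x.2 ^ 2) x.1 h).deriv]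

/-- The Kepler potential is compatible with the Killing tensor `K(β)` on
`ℝ² ∖ {0}` if and only if `β₃ = 0` and `β₁ = β₂`; hence the most general Killing
two-tensor compatible with the Kepler potential is, modulo multiples of the
metric, the three-parameter family `K¹¹ = 2β₄x₂ + β₆x₂²`,
`K¹² = −β₄x₁ − β₅x₂ − β₆x₁x₂`, `K²² = 2β₅x₁ + β₆x₁²`. -/
theorem kepler_compatible_iff (β : Fin 6 → ℝ) :
    Compatible β kepler {x : ℝ × ℝ | x ≠ 0} ↔ β 2 = 0 ∧ β 0 = β 1 := by
  constructor
  · intro hC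
    have h01 : ((0, 1) : ℝ × ℝ) ≠ 0 := by
      simp [Prod.ext_iff]
    have h11 : ((1, 1) : ℝ × ℝ) ≠ 0 := by
      simp [Prod.ext_iff]
    have e1 := hC (0, 1) h01
    have e2 := hC (1, 1) h11
    rw [pd2_P β h01, pd1_Q β h01] at e1
    rw [pd2_P β h11, pd1_Q β h11] at e2
    norm_num [Real.sqrt_one] at e1
    have hsqrt2 : Real.sqrt 2 ≠ 0 := by positivity
    norm_num at e2
    have e2' : 3 * β 0 + β 2 = 3 * β 1 + β 2 := by
      have h2 : (0:ℝ) < Real.sqrt 2 := by positivity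
      nlinarith [e2, Real.sq_sqrt (by norm_num : (2:ℝ) ≥ 0)]
    constructor <;> linarith
  · rintro ⟨h2, h01⟩ x hx
    rw [pd2_P β hx, pd1_Q β hx, add_comm (x.2 ^ 2) (x.1 ^ 2)]
    congr 1
    rw [h2, h01]
    ring
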